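/- Ellipticity of the principal symbol of the p-d'Alembertian: let p < 1 be a real number and let w ∈ ℝ^{n+1} be timelike, i.e. η(w,w) > 0. Then the quadratic form Q(ζ) := (2−p) · η(w,ζ)² / η(w,w) − η(ζ,ζ) is positive definite on ℝ^{n+1}: Q(ζ) > 0 for every ζ ≠ 0. -/

import Mathlib

/-- The Minkowski bilinear form on `ℝ^{n+1}`. -/
def minkEta (n : ℕ) (v w : Fin (n + 1) → ℝ) : ℝ :=
  v 0 * w 0 - ∑ i : Fin n, v i.succ * w i.succ

lemma minkEta_sub_smul (n : ℕ) (t : ℝ) (w ζ : Fin (n + 1) → ℝ) :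
    minkEta n w (fun i => ζ i - t * w i) = minkEta n w ζ - t * minkEta n w w := by
  simp only [minkEta, mul_sub, Finset.sum_sub_distrib, Finset.mul_sum]
  ring_nf

lemma minkEta_expand (n : ℕ) (t : ℝ) (w ζ : Fin (n + 1) → ℝ) :
    minkEta n (fun i => ζ i - t * w i) (fun i => ζ i - t * w i)
      = minkEta n ζ ζ - 2 * t * minkEta n w ζ + t ^ 2 * minkEta n w w := by
  simp only [minkEta, mul_sub, sub_mul, Finset.sum_sub_distrib, Finset.mul_sum]
  have e2 : ∑ i : Fin n, 2 * t * (w i.succ * ζ i.succ)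
      = ∑ x : Fin n, t * w x.succ * ζ x.succ + ∑ x : Fin n, ζ x.succ * (t * w x.succ) := by
    rw [← Finset.sum_add_distrib]; exact Finset.sum_congr rfl fun i _ => by ring
  have e3 : ∑ i : Fin n, t ^ 2 * (w i.succ * w i.succ)
      = ∑ x : Fin n, t * w x.succ * (t * w x.succ) :=
    Finset.sum_congr rfl fun i _ => by ring
  rw [e2, e3]; ring

/-- A nonzero vector Minkowski-orthogonal to a timelike vector is spacelike. -/
lemma orth_spacelike (n : ℕ) (w ζ : Fin (n + 1) → ℝ)
    (hw : 0 < minkEta n w w) (horth : minkEta n w ζ = 0) (hζ : ζ ≠ 0) :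
    minkEta n ζ ζ < 0 := by
  simp only [minkEta] at *
  set a := w 0 with ha
  set c := ζ 0 with hc
  set S := ∑ i : Fin n, w i.succ * ζ i.succ with hS
  set B := ∑ i : Fin n, w i.succ * w i.succ with hB
  set D := ∑ i : Fin n, ζ i.succ * ζ i.succ with hD
  have hBnn : 0 ≤ B := Finset.sum_nonneg fun i _ => mul_self_nonneg _
  have hDnn : 0 ≤ D := Finset.sum_nonneg fun i _ => mul_self_nonneg _
  have hCS : S ^ 2 ≤ B * D := by
    calc S ^ 2 ≤ (∑ i : Fin n, w i.succ ^ 2) * (∑ i : Fin n, ζ i.succ ^ 2) := by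
          exact Finset.sum_mul_sq_le_sq_mul_sq _ _ _
      _ = B * D := by rw [hB, hD]; congr 1 <;> exact Finset.sum_congr rfl fun i _ => (sq _)
  have hac : a * c = S := by linarith
  rcases eq_or_lt_of_le hDnn with hDz | hDpos
  · -- D = 0 : all spatial components of ζ vanish, then ζ = 0, contradiction
    have hzero : ∀ i : Fin n, ζ i.succ = 0 := by
      intro i
      have h := (Finset.sum_eq_zero_iff_of_nonneg
        (fun i _ => mul_self_nonneg (ζ i.succ))).mp hDz.symm i (Finset.mem_univ i)
      exact mul_self_eq_zero.mp h
    have hSz : S = 0 := Finset.sum_eq_zero fun i _ => by rw [hzero i, mul_zero]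
    have ha0 : a ≠ 0 := by
      intro h; rw [h] at hw; nlinarith
    have hc0 : c = 0 := by
      have : a * c = 0 := by rw [hac, hSz]
      exact (mul_eq_zero.mp this).resolve_left ha0
    exfalso
    apply hζ
    funext i
    refine Fin.cases ?_ ?_ i
    · exact hc0
    · intro j; exact hzero j
  · -- D > 0
    have ha2 : B < a * a := by linarith
    have ha2pos : 0 < a * a := lt_of_le_of_lt hBnn ha2
    have hlt : B * D < a * a * D := mul_lt_mul_of_pos_right ha2 hDpos
    have hS2 : S ^ 2 = a * a * (c * c) := by rw [← hac]; ring
    nlinarith [hS2, hCS, hlt, ha2pos]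

/-- Ellipticity of the principal symbol of the `p`-d'Alembertian: for `p < 1` and a
timelike vector `w`, the quadratic form
`Q(ζ) = (2-p)·η(w,ζ)²/η(w,w) − η(ζ,ζ)` is positive definite. -/
theorem p_dalembertian_symbol_elliptic (n : ℕ) (hn : 1 ≤ n) (p : ℝ) (hp : p < 1)
    (w : Fin (n + 1) → ℝ) (hw : 0 < minkEta n w w) :
    ∀ ζ : Fin (n + 1) → ℝ, ζ ≠ 0 →
      0 < (2 - p) * minkEta n w ζ ^ 2 / minkEta n w w - minkEta n ζ ζ := by
  intro ζ hζ
  set E := minkEta n w w with hE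
  set u := minkEta n w ζ with hu
  have hEne : E ≠ 0 := ne_of_gt hw
  set t : ℝ := u / E with ht
  have h1 : minkEta n w (fun i => ζ i - t * w i) = 0 := by
    rw [minkEta_sub_smul, ← hu, ← hE, ht, div_mul_cancel₀ _ hEne, sub_self]
  have h2 : minkEta n (fun i => ζ i - t * w i) (fun i => ζ i - t * w i)
      = minkEta n ζ ζ - 2 * t * u + t ^ 2 * E := by
    rw [minkEta_expand, ← hu, ← hE]
  have htE : t * E = u := div_mul_cancel₀ _ hEne
  by_cases hz : (fun i => ζ i - t * w i) = 0
  · -- ζ is a nonzero multiple of w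
    have hζeq : ∀ i, ζ i = t * w i := fun i => by
      have := congrFun hz i; simpa [sub_eq_zero] using this
    have hteq : u = t * E := by
      rw [hz] at h1
      have h0 : minkEta n w (0 : Fin (n + 1) → ℝ) = 0 := by simp [minkEta]
      -- h1 : minkEta n w 0 = 0 after rw; recompute u - t*E = 0 from original form
      have := minkEta_sub_smul n t w ζ
      rw [hz] at this
      rw [h0] at this
      rw [← hu, ← hE] at this
      linarith
    have htne : t ≠ 0 := by
      intro h0
      apply hζ
      funext i
      rw [hζeq i, h0, zero_mul]; rfl
    have hζζ : minkEta n ζ ζ = t ^ 2 * E := by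
      rw [hz] at h2
      have h0 : minkEta n (0 : Fin (n + 1) → ℝ) 0 = 0 := by simp [minkEta]
      rw [h0] at h2
      have htu : t * u = t ^ 2 * E := by rw [hteq]; ring
      linarith
    have hdiv : (2 - p) * u ^ 2 / E = (2 - p) * t ^ 2 * E := by
      rw [hteq]; field_simp
    rw [hdiv, hζζ]
    have ht2 : 0 < t ^ 2 := by positivity
    nlinarith [mul_pos ht2 hw]
  · -- the orthogonal component is nonzero, hence spacelike
    have hsp : minkEta n (fun i => ζ i - t * w i) (fun i => ζ i - t * w i) < 0 :=
      orth_spacelike n w _ hw h1 hz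
    rw [h2] at hsp
    rw [sub_pos, lt_div_iff₀ hw]
    have h3 : t * u * E = u ^ 2 := by
      rw [mul_comm t u, mul_assoc, htE]; ring
    nlinarith [hsp, h3, sq_nonneg u, hw, mul_pos hw hw]
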